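/- In a right proper model category with weak equivalences closed under finite products, if X is cofibrant and Y is fibrant then the canonical function φ : π₀H(X,Y) → [X,Y], sending a cocycle (f,g) to g∘f⁻¹ in the homotopy category, is a bijection. -/

import Mathlib

open CategoryTheory CategoryTheory.Limits

universe v u

/-- A (closed) model structure on a category `M` with all finite limits and colimits. -/
structure ModelStr (M : Type u) [Category.{v} M] : Type (max u v) where
  weq : MorphismProperty M
  fib : MorphismProperty M
  cof : MorphismProperty M
  weq_id : ∀ X : M, weq (𝟙 X)
  /-- CM2, two out of three -/
  weq_comp : ∀ {X Y Z : M} (f : X ⟶ Y) (g : Y ⟶ Z), weq f → weq g → weq (f ≫ g)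
  weq_cancel_left : ∀ {X Y Z : M} (f : X ⟶ Y) (g : Y ⟶ Z), weq f → weq (f ≫ g) → weq g
  weq_cancel_right : ∀ {X Y Z : M} (f : X ⟶ Y) (g : Y ⟶ Z), weq g → weq (f ≫ g) → weq f
  /-- CM3: the three classes are closed under retracts. -/
  retracts : ∀ {X Y X' Y' : M} (f : X ⟶ Y) (g : X' ⟶ Y') (i : X ⟶ X') (r : X' ⟶ X)
    (j : Y ⟶ Y') (s : Y' ⟶ Y), i ≫ r = 𝟙 X → j ≫ s = 𝟙 Y → i ≫ g = f ≫ j → g ≫ s = r ≫ f →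
    (weq g → weq f) ∧ (fib g → fib f) ∧ (cof g → cof f)
  /-- CM4: lifting -/
  lifting : ∀ {A B X Y : M} (i : A ⟶ B) (p : X ⟶ Y) (u : A ⟶ X) (v : B ⟶ Y),
    cof i → fib p → (weq i ∨ weq p) → u ≫ p = i ≫ v →
    ∃ l : B ⟶ X, i ≫ l = u ∧ l ≫ p = v
  /-- CM5: factorizations -/
  fact_cof_triv_fib : ∀ {X Y : M} (f : X ⟶ Y),
    ∃ (Z : M) (i : X ⟶ Z) (q : Z ⟶ Y), cof i ∧ fib q ∧ weq q ∧ i ≫ q = f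
  fact_triv_cof_fib : ∀ {X Y : M} (f : X ⟶ Y),
    ∃ (Z : M) (j : X ⟶ Z) (p : Z ⟶ Y), cof j ∧ weq j ∧ fib p ∧ j ≫ p = f

/-- Right properness: weak equivalences are stable under pullback along fibrations. -/
def ModelStr.RightProper {M : Type u} [Category.{v} M] (S : ModelStr M) : Prop :=
  ∀ {P A B C : M} (fst : P ⟶ A) (snd : P ⟶ B) (f : A ⟶ C) (g : B ⟶ C),
    IsPullback fst snd f g → S.weq f → S.fib g → S.weq snd

/-- The weak equivalences are closed under finite products: `f × 1` and `1 × f` are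
weak equivalences whenever `f` is. -/
def ModelStr.WeqClosedUnderProducts {M : Type u} [Category.{v} M] [HasBinaryProducts M]
    (S : ModelStr M) : Prop :=
  ∀ {A B : M} (f : A ⟶ B) (Z : M), S.weq f →
    S.weq (Limits.prod.map f (𝟙 Z)) ∧ S.weq (Limits.prod.map (𝟙 Z) f)

/-- A cocycle from `X` to `Y`: a pair of maps `X ⟵ Z ⟶ Y` whose first leg is a weak
equivalence. -/
structure Cocycle {M : Type u} [Category.{v} M] (W : MorphismProperty M) (X Y : M) :
    Type (max u v) where
  Z : M
  f : Z ⟶ X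
  g : Z ⟶ Y
  hf : W f

/-- A morphism of cocycles `(f,g) → (f',g')` is a map of the middle objects commuting with
both legs.  Path components of the cocycle category are the quotient by the equivalence
relation generated by this relation. -/
def cocycleRel {M : Type u} [Category.{v} M] (W : MorphismProperty M) (X Y : M)
    (c c' : Cocycle W X Y) : Prop :=
  ∃ α : c.Z ⟶ c'.Z, α ≫ c'.f = c.f ∧ α ≫ c'.g = c.g

/-- `π₀H(X,Y)`, the path components of the cocycle category. -/
def pi0H {M : Type u} [Category.{v} M] (W : MorphismProperty M) (X Y : M) :=
  Quot (cocycleRel W X Y)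

namespace CocycleTheoremProof

variable {M : Type u} [Category.{v} M] [HasFiniteLimits M]

/-- Post-composition of a cocycle with a morphism on the target side. -/
@[simps]
def pushC (S : ModelStr M) {X A B : M} (w : A ⟶ B) (c : Cocycle S.weq X A) :
    Cocycle S.weq X B :=
  ⟨c.Z, c.f, c.g ≫ w, c.hf⟩

theorem pushC_rel (S : ModelStr M) {X A B : M} (w : A ⟶ B) :
    ∀ c c' : Cocycle S.weq X A, cocycleRel S.weq X A c c' →
      cocycleRel S.weq X B (pushC S w c) (pushC S w c') := by
  rintro c c' ⟨α, h1, h2⟩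
  exact ⟨α, h1, by show α ≫ c'.g ≫ w = c.g ≫ w; rw [← Category.assoc, h2]⟩

/-- The induced map on path components. -/
def pushP (S : ModelStr M) {X A B : M} (w : A ⟶ B) :
    pi0H S.weq X A → pi0H S.weq X B :=
  Quot.map (pushC S w) (pushC_rel S w)

theorem isPullback_prodSnd {X A B : M} (w : A ⟶ B) :
    IsPullback (prod.snd : X ⨯ A ⟶ A) (prod.map (𝟙 X) w) w (prod.snd : X ⨯ B ⟶ B) := by
  have comm : (prod.snd : X ⨯ A ⟶ A) ≫ w = prod.map (𝟙 X) w ≫ prod.snd := by simp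
  refine IsPullback.of_isLimit (PullbackCone.IsLimit.mk comm
    (fun s => prod.lift (s.snd ≫ prod.fst) s.fst) (fun s => by simp [prod.lift_snd]) (fun s => ?_) ?_)
  · apply Limits.prod.hom_ext <;> simp [← s.condition, prod.lift_fst, prod.lift_snd]
  · intro s m h1 h2
    apply Limits.prod.hom_ext
    · have := h2 =≫ (prod.fst : X ⨯ B ⟶ X); simpa [prod.lift_fst] using this
    · simpa [prod.lift_snd] using h1

/-- The key consequence of right properness + products: pulling back a weak
equivalence `w : A ⟶ B` along the second component of a fibration `q : Z' ⟶ X ⨯ B`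
gives a weak equivalence. -/
theorem weq_pullback_fst (S : ModelStr M) (hproper : S.RightProper)
    (hprod : S.WeqClosedUnderProducts) {X A B Z' : M} (w : A ⟶ B) (hw : S.weq w)
    (q : Z' ⟶ X ⨯ B) (hq : S.fib q) :
    S.weq (pullback.fst (q ≫ prod.snd) w) := by
  set pf := pullback.fst (q ≫ prod.snd) w
  set ps := pullback.snd (q ≫ prod.snd) w
  set t : pullback (q ≫ prod.snd) w ⟶ X ⨯ A :=
    prod.lift (pf ≫ q ≫ prod.fst) ps with ht
  have hts : t ≫ prod.snd = ps := by simp [ht, prod.lift_snd]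
  have hbig : IsPullback (t ≫ (prod.snd : X ⨯ A ⟶ A)) pf w (q ≫ prod.snd) := by
    rw [hts]
    exact (IsPullback.of_hasPullback (q ≫ prod.snd) w).flip
  have hcomm : t ≫ prod.map (𝟙 X) w = pf ≫ q := by
    apply Limits.prod.hom_ext
    · simp [ht, prod.lift_fst]
    · have := pullback.condition (f := q ≫ prod.snd) (g := w)
      simp only [Category.assoc] at this ⊢
      simp [ht, prod.lift_snd_assoc]; exact this.symm
  have hsq : IsPullback t pf (prod.map (𝟙 X) w) q :=
    IsPullback.of_right hbig hcomm (isPullback_prodSnd w)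
  exact hproper t pf (prod.map (𝟙 X) w) q hsq (hprod w X hw).2 hq

/-- Data for a factorization of `⟨d.f, d.g⟩ : Z ⟶ X ⨯ B` as a trivial cofibration
followed by a fibration. -/
structure LData (S : ModelStr M) {X B : M} (d : Cocycle S.weq X B) where
  Z' : M
  j : d.Z ⟶ Z'
  q : Z' ⟶ X ⨯ B
  hcof : S.cof j
  hwj : S.weq j
  hfib : S.fib q
  hfac : j ≫ q = prod.lift d.f d.g

noncomputable def getLData (S : ModelStr M) {X B : M} (d : Cocycle S.weq X B) :
    LData S d := by
  have h := S.fact_triv_cof_fib (prod.lift d.f d.g)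
  exact ⟨h.choose, h.choose_spec.choose, h.choose_spec.choose_spec.choose,
    h.choose_spec.choose_spec.choose_spec.1,
    h.choose_spec.choose_spec.choose_spec.2.1,
    h.choose_spec.choose_spec.choose_spec.2.2.1,
    h.choose_spec.choose_spec.choose_spec.2.2.2⟩

theorem LData.jf {S : ModelStr M} {X B : M} {d : Cocycle S.weq X B} (ld : LData S d) :
    ld.j ≫ ld.q ≫ prod.fst = d.f := by
  rw [← Category.assoc, ld.hfac]; simp [prod.lift_fst]

theorem LData.jg {S : ModelStr M} {X B : M} {d : Cocycle S.weq X B} (ld : LData S d) :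
    ld.j ≫ ld.q ≫ prod.snd = d.g := by
  rw [← Category.assoc, ld.hfac]; simp [prod.lift_snd]

theorem LData.weq_f' {S : ModelStr M} {X B : M} {d : Cocycle S.weq X B} (ld : LData S d) :
    S.weq (ld.q ≫ prod.fst) := by
  apply S.weq_cancel_left ld.j _ ld.hwj
  rw [ld.jf]; exact d.hf

/-- The "lift" of a cocycle along a weak equivalence `w : A ⟶ B`, given factorization
data. -/
noncomputable def Lcoc (S : ModelStr M) (hproper : S.RightProper)
    (hprod : S.WeqClosedUnderProducts) {X A B : M} (w : A ⟶ B) (hw : S.weq w)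
    {d : Cocycle S.weq X B} (ld : LData S d) : Cocycle S.weq X A where
  Z := pullback (ld.q ≫ prod.snd) w
  f := pullback.fst (ld.q ≫ prod.snd) w ≫ ld.q ≫ prod.fst
  g := pullback.snd (ld.q ≫ prod.snd) w
  hf := S.weq_comp _ _ (weq_pullback_fst S hproper hprod w hw ld.q ld.hfib) ld.weq_f'

theorem Lcoc_rel (S : ModelStr M) (hproper : S.RightProper)
    (hprod : S.WeqClosedUnderProducts) {X A B : M} (w : A ⟶ B) (hw : S.weq w)
    {d₁ d₂ : Cocycle S.weq X B} (ld₁ : LData S d₁) (ld₂ : LData S d₂)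
    (h : cocycleRel S.weq X B d₁ d₂) :
    cocycleRel S.weq X A (Lcoc S hproper hprod w hw ld₁) (Lcoc S hproper hprod w hw ld₂) := by
  obtain ⟨α, hf, hg⟩ := h
  have hsq : (α ≫ ld₂.j) ≫ ld₂.q = ld₁.j ≫ ld₁.q := by
    rw [Category.assoc, ld₂.hfac, ld₁.hfac]
    apply Limits.prod.hom_ext <;> simp [hf, hg]
  obtain ⟨l, hl1, hl2⟩ := S.lifting ld₁.j ld₂.q (α ≫ ld₂.j) ld₁.q ld₁.hcof ld₂.hfib
    (Or.inl ld₁.hwj) (by rw [hsq])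
  have hcond : (pullback.fst (ld₁.q ≫ prod.snd) w ≫ l) ≫ ld₂.q ≫ prod.snd =
      pullback.snd (ld₁.q ≫ prod.snd) w ≫ w := by
    rw [Category.assoc, ← Category.assoc l, hl2, ← Category.assoc, Category.assoc,
      pullback.condition]
  refine ⟨pullback.lift (pullback.fst _ _ ≫ l) (pullback.snd _ _) hcond, ?_, ?_⟩
  · dsimp [Lcoc]
    rw [← Category.assoc, pullback.lift_fst, Category.assoc, ← Category.assoc l, hl2]
  · exact pullback.lift_snd _ _ _

theorem Lcoc_pushC (S : ModelStr M) (hproper : S.RightProper)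
    (hprod : S.WeqClosedUnderProducts) {X A B : M} (w : A ⟶ B) (hw : S.weq w)
    (c : Cocycle S.weq X A) (ld : LData S (pushC S w c)) :
    cocycleRel S.weq X A c (Lcoc S hproper hprod w hw ld) := by
  have hcond : ld.j ≫ ld.q ≫ prod.snd = c.g ≫ w := ld.jg
  refine ⟨pullback.lift ld.j c.g hcond, ?_, ?_⟩
  · dsimp [Lcoc]
    exact (pullback.lift_fst_assoc _ _ hcond _).trans ld.jf
  · exact pullback.lift_snd _ _ _

theorem pushC_Lcoc (S : ModelStr M) (hproper : S.RightProper)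
    (hprod : S.WeqClosedUnderProducts) {X A B : M} (w : A ⟶ B) (hw : S.weq w)
    (d : Cocycle S.weq X B) (ld : LData S d) :
    Quot.mk (cocycleRel S.weq X B) (pushC S w (Lcoc S hproper hprod w hw ld)) =
      Quot.mk (cocycleRel S.weq X B) d := by
  have hweqf' : S.weq (ld.q ≫ prod.fst) := ld.weq_f'
  have h1 : cocycleRel S.weq X B (pushC S w (Lcoc S hproper hprod w hw ld))
      ⟨ld.Z', ld.q ≫ prod.fst, ld.q ≫ prod.snd, hweqf'⟩ := by
    refine ⟨pullback.fst (ld.q ≫ prod.snd) w, rfl, ?_⟩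
    dsimp [Lcoc, pushC]
    exact pullback.condition
  have h2 : cocycleRel S.weq X B d
      ⟨ld.Z', ld.q ≫ prod.fst, ld.q ≫ prod.snd, hweqf'⟩ := ⟨ld.j, ld.jf, ld.jg⟩
  exact (Quot.sound h1).trans (Quot.sound h2).symm

theorem pushP_bijective (S : ModelStr M) (hproper : S.RightProper)
    (hprod : S.WeqClosedUnderProducts) {X A B : M} (w : A ⟶ B) (hw : S.weq w) :
    Function.Bijective (pushP S w : pi0H S.weq X A → pi0H S.weq X B) := by
  have hL : ∀ d₁ d₂ : Cocycle S.weq X B, cocycleRel S.weq X B d₁ d₂ →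
      Quot.mk (cocycleRel S.weq X A) (Lcoc S hproper hprod w hw (getLData S d₁)) =
      Quot.mk (cocycleRel S.weq X A) (Lcoc S hproper hprod w hw (getLData S d₂)) :=
    fun d₁ d₂ h => Quot.sound (Lcoc_rel S hproper hprod w hw _ _ h)
  let L : pi0H S.weq X B → pi0H S.weq X A :=
    Quot.lift (fun d => Quot.mk _ (Lcoc S hproper hprod w hw (getLData S d))) hL
  have hLid : ∀ x : pi0H S.weq X A, L (pushP S w x) = x := by
    refine Quot.ind ?_
    intro c
    exact (Quot.sound (Lcoc_pushC S hproper hprod w hw c (getLData S (pushC S w c)))).symm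
  constructor
  · intro x y hxy
    rw [← hLid x, ← hLid y, hxy]
  · refine Quot.ind ?_
    intro d
    exact ⟨Quot.mk _ (Lcoc S hproper hprod w hw (getLData S d)),
      pushC_Lcoc S hproper hprod w hw d (getLData S d)⟩

/-- The functor `A ↦ π₀H(X, A)`. -/
def Fctr (S : ModelStr M) (X : M) : M ⥤ Type (max u v) where
  obj A := pi0H S.weq X A
  map {A B} w := TypeCat.ofHom (pushP S w)
  map_id A := by
    ext x
    obtain ⟨c⟩ := x
    exact Quot.sound ⟨𝟙 c.Z, Category.id_comp _, by simp [pushC]⟩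
  map_comp {A B C} f g := by
    ext x
    obtain ⟨c⟩ := x
    exact Quot.sound ⟨𝟙 c.Z, Category.id_comp _, by simp [pushC]⟩

theorem Fctr_inverts (S : ModelStr M) (hproper : S.RightProper)
    (hprod : S.WeqClosedUnderProducts) (X : M) :
    S.weq.IsInvertedBy (Fctr S X) := fun A B w hw =>
  (isIso_iff_bijective _).2 (pushP_bijective S hproper hprod w hw)

theorem phi_wd (S : ModelStr M) {X A : M} (c c' : Cocycle S.weq X A)
    (h : cocycleRel S.weq X A c c') :
    (haveI : IsIso (S.weq.Q.map c.f) := S.weq.Q_inverts c.f c.hf; inv (S.weq.Q.map c.f))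
      ≫ S.weq.Q.map c.g =
    (haveI : IsIso (S.weq.Q.map c'.f) := S.weq.Q_inverts c'.f c'.hf; inv (S.weq.Q.map c'.f))
      ≫ S.weq.Q.map c'.g := by
  obtain ⟨α, h1, h2⟩ := h
  haveI : IsIso (S.weq.Q.map c.f) := S.weq.Q_inverts c.f c.hf
  haveI : IsIso (S.weq.Q.map c'.f) := S.weq.Q_inverts c'.f c'.hf
  have e1 : S.weq.Q.map c.f = S.weq.Q.map α ≫ S.weq.Q.map c'.f := by
    rw [← Functor.map_comp, h1]
  have e2 : S.weq.Q.map c.g = S.weq.Q.map α ≫ S.weq.Q.map c'.g := by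
    rw [← Functor.map_comp, h2]
  rw [e2, IsIso.inv_comp_eq, e1]
  simp

/-- The canonical comparison map `π₀H(X,A) → [X,A]`. -/
noncomputable def phiA (S : ModelStr M) (X A : M) :
    pi0H S.weq X A → (S.weq.Q.obj X ⟶ S.weq.Q.obj A) :=
  Quot.lift (fun c =>
    (haveI : IsIso (S.weq.Q.map c.f) := S.weq.Q_inverts c.f c.hf; inv (S.weq.Q.map c.f))
      ≫ S.weq.Q.map c.g) (phi_wd S)

end CocycleTheoremProof

open CocycleTheoremProof in
theorem cocycle_pi0_bijection_of_cofibrant_fibrant {M : Type u} [Category.{v} M]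
    [HasFiniteLimits M] [HasFiniteColimits M]
    (S : ModelStr M) (hproper : S.RightProper) (hprod : S.WeqClosedUnderProducts)
    (X Y : M)
    (hX : S.cof (Limits.initial.to X))   -- `X` is cofibrant
    (hY : S.fib (Limits.terminal.from Y))  -- `Y` is fibrant
    :
    ∃ φ : pi0H S.weq X Y → (S.weq.Q.obj X ⟶ S.weq.Q.obj Y),
      (∀ c : Cocycle S.weq X Y,
        φ (Quot.mk _ c) =
          (haveI : IsIso (S.weq.Q.map c.f) := S.weq.Q_inverts c.f c.hf
           inv (S.weq.Q.map c.f)) ≫ S.weq.Q.map c.g) ∧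
      Function.Bijective φ := by
  classical
  set F : M ⥤ Type (max u v) := Fctr S X with hF
  have hinv : S.weq.IsInvertedBy F := Fctr_inverts S hproper hprod X
  set G : S.weq.Localization ⥤ Type (max u v) := Localization.Construction.lift F hinv
    with hG
  have hfac : S.weq.Q ⋙ G = F := Localization.Construction.fac F hinv
  have hmap : ∀ {A B : M} (f : A ⟶ B), G.map (S.weq.Q.map f) = F.map f := by
    intro A B f
    rfl
  -- as a natural transformation from `Q ⋙ G` to `Q ⋙ coyoneda.obj (op (Q.obj X))`
  let τ : S.weq.Q ⋙ G ⟶ S.weq.Q ⋙ coyoneda.obj (Opposite.op (S.weq.Q.obj X)) := by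
    refine ⟨fun A => TypeCat.ofHom (phiA S X A), ?_⟩
    intro A B f
    ext x
    obtain ⟨c⟩ := x
    show phiA S X B (G.map (S.weq.Q.map f) (Quot.mk _ c)) =
      phiA S X A (Quot.mk _ c) ≫ S.weq.Q.map f
    rw [hmap]
    show (haveI : IsIso (S.weq.Q.map c.f) := S.weq.Q_inverts c.f c.hf; inv (S.weq.Q.map c.f))
        ≫ S.weq.Q.map (c.g ≫ f) =
      ((haveI : IsIso (S.weq.Q.map c.f) := S.weq.Q_inverts c.f c.hf; inv (S.weq.Q.map c.f))
        ≫ S.weq.Q.map c.g) ≫ S.weq.Q.map f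
    erw [Functor.map_comp, Category.assoc]
  set T : G ⟶ coyoneda.obj (Opposite.op (S.weq.Q.obj X)) :=
    Localization.Construction.natTransExtension τ with hT
  have hTapp : ∀ A : M, T.app (S.weq.Q.obj A) = TypeCat.ofHom (phiA S X A) := fun A =>
    Localization.Construction.NatTransExtension.app_eq τ A
  -- the distinguished point
  let x₀ : G.obj (S.weq.Q.obj X) :=
    (Quot.mk _ ⟨X, 𝟙 X, 𝟙 X, S.weq_id X⟩ : pi0H S.weq X X)
  let ψ : (S.weq.Q.obj X ⟶ S.weq.Q.obj Y) → pi0H S.weq X Y := fun u => G.map u x₀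
  refine ⟨phiA S X Y, fun c => rfl, Function.bijective_iff_has_inverse.2 ⟨ψ, ?_, ?_⟩⟩
  · -- left inverse : ψ ∘ φ = id
    refine Quot.ind (fun c => ?_)
    haveI : IsIso (S.weq.Q.map c.f) := S.weq.Q_inverts c.f c.hf
    show G.map (inv (S.weq.Q.map c.f) ≫ S.weq.Q.map c.g) x₀ = Quot.mk _ c
    rw [G.map_comp]
    set y : pi0H S.weq X c.Z := G.map (inv (S.weq.Q.map c.f)) x₀ with hy
    have hy' : pushP S c.f y = x₀ := by
      show (G.map (inv (S.weq.Q.map c.f)) ≫ G.map (S.weq.Q.map c.f)) x₀ = x₀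
      rw [← G.map_comp, IsIso.inv_hom_id, G.map_id]
      rfl
    have hinj : Function.Injective (pushP S c.f : pi0H S.weq X c.Z → pi0H S.weq X X) :=
      (pushP_bijective S hproper hprod c.f c.hf).1
    have hyval : y = Quot.mk _ (⟨c.Z, c.f, 𝟙 c.Z, c.hf⟩ : Cocycle S.weq X c.Z) := by
      apply hinj
      rw [hy']
      show (x₀ : pi0H S.weq X X) =
        Quot.mk _ (pushC S c.f ⟨c.Z, c.f, 𝟙 c.Z, c.hf⟩)
      exact (Quot.sound ⟨c.f, Category.comp_id c.f, by simp [pushC]⟩).symm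
    show (G.map (S.weq.Q.map c.g)) y = Quot.mk _ c
    rw [hmap, hyval]
    show Quot.mk _ (pushC S c.g ⟨c.Z, c.f, 𝟙 c.Z, c.hf⟩) = Quot.mk _ c
    exact Quot.sound ⟨𝟙 c.Z, Category.id_comp _, by simp [pushC]⟩
  · -- right inverse : φ ∘ ψ = id
    intro u
    have hnat := ConcreteCategory.congr_hom (T.naturality u) x₀
    have happX : T.app (S.weq.Q.obj X) x₀ = 𝟙 (S.weq.Q.obj X) := by
      rw [hTapp X]
      show (haveI : IsIso (S.weq.Q.map (𝟙 X)) := S.weq.Q_inverts _ (S.weq_id X)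
        inv (S.weq.Q.map (𝟙 X))) ≫ S.weq.Q.map (𝟙 X) = 𝟙 _
      simp
    have : T.app (S.weq.Q.obj Y) (G.map u x₀) = T.app (S.weq.Q.obj X) x₀ ≫ u := hnat
    rw [happX, Category.id_comp] at this
    show phiA S X Y (G.map u x₀) = u
    rw [hTapp Y] at this
    exact this
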